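/- arXiv:2301.07819 — 2 statements merged into one kernel-verified Lean document; each statement's English description precedes it below -/
import Mathlib

section
/- Let α ∈ (0,1) and F_μ be an α-stable Lévy measure on ℝ^d with polar decomposition over a finite measure μ on the unit sphere. For every φ ∈ C_b³(ℝ^d) (bounded with bounded derivatives up to order 3) and all x, x' ∈ ℝ^d and δ ∈ (0,1), we have ∫_{ℝ^d} |δ_λ φ(x') − δ_λ φ(x)| F_μ(dλ) ≤ K_α (4‖Dφ‖_∞^δ ‖φ‖_∞^{1−δ} + 2‖D²φ‖_∞^δ ‖Dφ‖_∞^{1−δ}) |x'−x|^δ, where δ_λ φ(x) := φ(x+λ) − φ(x) and K_α := ∫_{ℝ^d} (|λ| ∧ 1) F_μ(dλ). -/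
open MeasureTheory Set

private lemma aux_interp {g A B δ : ℝ} (hδ0 : 0 < δ) (hδ1 : δ < 1)
    (h1 : |g| ≤ A) (h2 : |g| ≤ B) : |g| ≤ B ^ δ * A ^ (1 - δ) := by
  rcases eq_or_lt_of_le (abs_nonneg g) with h0 | h0
  · rw [← h0]
    have hA : (0:ℝ) ≤ A := le_trans (abs_nonneg g) h1
    have hB : (0:ℝ) ≤ B := le_trans (abs_nonneg g) h2
    positivity
  · have e : |g| = |g| ^ δ * |g| ^ (1 - δ) := by
      rw [← Real.rpow_add h0, show δ + (1 - δ) = 1 by ring, Real.rpow_one]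
    rw [e]
    exact mul_le_mul (Real.rpow_le_rpow (abs_nonneg g) h2 hδ0.le)
      (Real.rpow_le_rpow (abs_nonneg g) h1 (by linarith))
      (Real.rpow_nonneg (abs_nonneg g) _)
      (Real.rpow_nonneg (le_trans (abs_nonneg g) h2) _)

/-- For `α ∈ (0,1)`, an α-stable Lévy measure `F_μ`, `φ ∈ C_b³(ℝ^d)` with
`‖φ‖_∞ ≤ M0`, `‖Dφ‖_∞ ≤ M1`, `‖D²φ‖_∞ ≤ M2`, and `δ ∈ (0,1)`:
`∫ |δ_λφ(x') − δ_λφ(x)| dF_μ ≤ K_α (4 M1^δ M0^{1-δ} + 2 M2^δ M1^{1-δ}) |x'-x|^δ`,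
where `δ_λφ(x) = φ(x+λ) − φ(x)` and `K_α = ∫ (|λ| ∧ 1) dF_μ`. -/
theorem stmt_1 {d : ℕ} (α δ : ℝ) (hα : α ∈ Set.Ioo (0:ℝ) 1) (hδ : δ ∈ Set.Ioo (0:ℝ) 1)
    (μ F : Measure (EuclideanSpace ℝ (Fin d))) [IsFiniteMeasure μ]
    (hμ : μ (Metric.sphere (0 : EuclideanSpace ℝ (Fin d)) 1)ᶜ = 0)
    (hF : ∀ B : Set (EuclideanSpace ℝ (Fin d)), MeasurableSet B →
      F B = ∫⁻ z, (∫⁻ r in Set.Ioi (0:ℝ),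
        Set.indicator B (fun _ => ENNReal.ofReal (r ^ (-1 - α))) (r • z)) ∂μ)
    (φ : EuclideanSpace ℝ (Fin d) → ℝ) (hφ : ContDiff ℝ 3 φ)
    (M0 M1 M2 Kα : ℝ)
    (hM0 : ∀ x, |φ x| ≤ M0) (hM0' : 0 ≤ M0)
    (hM1 : ∀ x, ‖fderiv ℝ φ x‖ ≤ M1) (hM1' : 0 ≤ M1)
    (hM2 : ∀ x, ‖iteratedFDeriv ℝ 2 φ x‖ ≤ M2) (hM2' : 0 ≤ M2)
    (hK : ∫⁻ l, ENNReal.ofReal (min ‖l‖ 1) ∂F = ENNReal.ofReal Kα) (hK' : 0 ≤ Kα)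
    (x x' : EuclideanSpace ℝ (Fin d)) :
    ∫⁻ l, ENNReal.ofReal |(φ (x' + l) - φ x') - (φ (x + l) - φ x)| ∂F
      ≤ ENNReal.ofReal
          (Kα * (4 * M1 ^ δ * M0 ^ (1 - δ) + 2 * M2 ^ δ * M1 ^ (1 - δ)) * ‖x' - x‖ ^ δ) := by
  obtain ⟨hδ0, hδ1⟩ := hδ
  have hφdiff : Differentiable ℝ φ := hφ.differentiable (by norm_num)
  have hφ' : ContDiff ℝ 2 (fderiv ℝ φ) := hφ.fderiv_right (by norm_num)
  have hφ'diff : Differentiable ℝ (fderiv ℝ φ) := hφ'.differentiable (by norm_num)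
  have hD2 : ∀ y, ‖fderiv ℝ (fderiv ℝ φ) y‖ ≤ M2 := by
    intro y
    calc ‖fderiv ℝ (fderiv ℝ φ) y‖
        = ‖iteratedFDeriv ℝ 0 (fderiv ℝ (fderiv ℝ φ)) y‖ := by rw [norm_iteratedFDeriv_zero]
      _ = ‖iteratedFDeriv ℝ (0+1) (fderiv ℝ φ) y‖ := norm_iteratedFDeriv_fderiv
      _ = ‖iteratedFDeriv ℝ (1+1) φ y‖ := norm_iteratedFDeriv_fderiv
      _ ≤ M2 := hM2 y
  -- Lipschitz bound for φ
  have hlip : ∀ (y l : EuclideanSpace ℝ (Fin d)), |φ (y + l) - φ y| ≤ M1 * ‖l‖ := by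
    intro y l
    have := Convex.norm_image_sub_le_of_norm_fderiv_le
      (f := φ) (fun z _ => hφdiff z) (fun z _ => hM1 z)
      convex_univ (mem_univ y) (mem_univ (y + l))
    simpa [Real.norm_eq_abs, add_sub_cancel_left] using this
  -- Lipschitz bound for fderiv φ
  have hlip' : ∀ (y l : EuclideanSpace ℝ (Fin d)),
      ‖fderiv ℝ φ (y + l) - fderiv ℝ φ y‖ ≤ M2 * ‖l‖ := by
    intro y l
    have := Convex.norm_image_sub_le_of_norm_fderiv_le
      (f := fderiv ℝ φ) (fun z _ => hφ'diff z) (fun z _ => hD2 z)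
      convex_univ (mem_univ y) (mem_univ (y + l))
    simpa [add_sub_cancel_left] using this
  -- derivative of the increment function
  have hψderiv : ∀ (l y : EuclideanSpace ℝ (Fin d)),
      HasFDerivAt (fun y => φ (y + l) - φ y) (fderiv ℝ φ (y + l) - fderiv ℝ φ y) y := by
    intro l y
    have h1 : HasFDerivAt (fun y : EuclideanSpace ℝ (Fin d) => φ (y + l))
        (fderiv ℝ φ (y + l)) y := by
      have := ((hφdiff (y + l)).hasFDerivAt).comp y ((hasFDerivAt_id y).add_const l)
      simpa [Function.comp_def] using this
    exact h1.sub (hφdiff y).hasFDerivAt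
  -- bound B : via x-increment
  have hB : ∀ l : EuclideanSpace ℝ (Fin d),
      |(φ (x' + l) - φ x') - (φ (x + l) - φ x)| ≤ min (M2 * ‖l‖) (2 * M1) * ‖x' - x‖ := by
    intro l
    have := Convex.norm_image_sub_le_of_norm_fderiv_le
      (f := fun y => φ (y + l) - φ y)
      (fun z _ => ((hψderiv l z).differentiableAt))
      (fun z _ => by
        rw [(hψderiv l z).fderiv]
        have hb2 : ‖fderiv ℝ φ (z + l) - fderiv ℝ φ z‖ ≤ 2 * M1 := by
          have := norm_sub_le (fderiv ℝ φ (z + l)) (fderiv ℝ φ z)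
          have := add_le_add (hM1 (z + l)) (hM1 z)
          linarith
        exact le_min (hlip' z l) hb2)
      convex_univ (mem_univ x) (mem_univ x')
    simpa [Real.norm_eq_abs] using this
  -- bound A : via l-increment
  have hA : ∀ l : EuclideanSpace ℝ (Fin d),
      |(φ (x' + l) - φ x') - (φ (x + l) - φ x)| ≤ 2 * min (M1 * ‖l‖) (2 * M0) := by
    intro l
    have b1 : ∀ y, |φ (y + l) - φ y| ≤ min (M1 * ‖l‖) (2 * M0) := by
      intro y
      refine le_min (hlip y l) ?_
      calc |φ (y + l) - φ y| ≤ |φ (y + l)| + |φ y| := abs_sub _ _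
        _ ≤ M0 + M0 := add_le_add (hM0 _) (hM0 _)
        _ = 2 * M0 := by ring
    calc |(φ (x' + l) - φ x') - (φ (x + l) - φ x)|
        ≤ |φ (x' + l) - φ x'| + |φ (x + l) - φ x| := abs_sub _ _
      _ ≤ min (M1 * ‖l‖) (2 * M0) + min (M1 * ‖l‖) (2 * M0) := add_le_add (b1 _) (b1 _)
      _ = 2 * min (M1 * ‖l‖) (2 * M0) := by ring
  -- key pointwise bound
  have key : ∀ l : EuclideanSpace ℝ (Fin d),
      |(φ (x' + l) - φ x') - (φ (x + l) - φ x)|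
        ≤ min ‖l‖ 1 * ((4 * M1 ^ δ * M0 ^ (1 - δ) + 2 * M2 ^ δ * M1 ^ (1 - δ)) * ‖x' - x‖ ^ δ) := by
    intro l
    have hxd : (0:ℝ) ≤ ‖x' - x‖ ^ δ := Real.rpow_nonneg (norm_nonneg _) _
    by_cases hl : ‖l‖ ≤ 1
    · rcases eq_or_ne l 0 with rfl | hl0
      · simp
      have hlpos : 0 < ‖l‖ := norm_pos_iff.mpr hl0
      have h1 : |(φ (x' + l) - φ x') - (φ (x + l) - φ x)| ≤ 2 * M1 * ‖l‖ := by
        calc _ ≤ 2 * min (M1 * ‖l‖) (2 * M0) := hA l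
          _ ≤ 2 * (M1 * ‖l‖) := by
              have := min_le_left (M1 * ‖l‖) (2 * M0); linarith
          _ = 2 * M1 * ‖l‖ := by ring
      have h2 : |(φ (x' + l) - φ x') - (φ (x + l) - φ x)| ≤ M2 * ‖l‖ * ‖x' - x‖ := by
        calc _ ≤ min (M2 * ‖l‖) (2 * M1) * ‖x' - x‖ := hB l
          _ ≤ M2 * ‖l‖ * ‖x' - x‖ :=
              mul_le_mul_of_nonneg_right (min_le_left _ _) (norm_nonneg _)
      have := aux_interp hδ0 hδ1 h1 h2
      rw [min_eq_left hl]
      refine this.trans ?_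
      have e1 : (M2 * ‖l‖ * ‖x' - x‖) ^ δ = M2 ^ δ * ‖l‖ ^ δ * ‖x' - x‖ ^ δ := by
        rw [Real.mul_rpow (by positivity) (norm_nonneg _),
          Real.mul_rpow hM2' (norm_nonneg _)]
      have e2 : (2 * M1 * ‖l‖) ^ (1-δ) = 2 ^ (1-δ) * M1 ^ (1-δ) * ‖l‖ ^ (1-δ) := by
        rw [Real.mul_rpow (by positivity) (norm_nonneg _),
          Real.mul_rpow (by norm_num) hM1']
      rw [e1, e2]
      have e3 : ‖l‖ ^ δ * ‖l‖ ^ (1-δ) = ‖l‖ := by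
        rw [← Real.rpow_add hlpos]; norm_num
      have h2le : (2:ℝ) ^ (1-δ) ≤ 2 := by
        calc (2:ℝ) ^ (1-δ) ≤ (2:ℝ) ^ (1:ℝ) :=
              Real.rpow_le_rpow_of_exponent_le one_le_two (by linarith)
          _ = 2 := Real.rpow_one 2
      calc M2 ^ δ * ‖l‖ ^ δ * ‖x' - x‖ ^ δ * (2 ^ (1-δ) * M1 ^ (1-δ) * ‖l‖ ^ (1-δ))
          = 2 ^ (1-δ) * (M2 ^ δ * M1 ^ (1-δ)) * (‖l‖ ^ δ * ‖l‖ ^ (1-δ)) * ‖x' - x‖ ^ δ := by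
            ring
        _ = 2 ^ (1-δ) * (M2 ^ δ * M1 ^ (1-δ)) * ‖l‖ * ‖x' - x‖ ^ δ := by rw [e3]
        _ ≤ 2 * (M2 ^ δ * M1 ^ (1-δ)) * ‖l‖ * ‖x' - x‖ ^ δ := by
            have hn : (0:ℝ) ≤ M2 ^ δ * M1 ^ (1-δ) :=
              mul_nonneg (Real.rpow_nonneg hM2' _) (Real.rpow_nonneg hM1' _)
            exact mul_le_mul_of_nonneg_right (mul_le_mul_of_nonneg_right
              (mul_le_mul_of_nonneg_right h2le hn) (norm_nonneg _)) hxd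
        _ ≤ ‖l‖ * ((4 * M1 ^ δ * M0 ^ (1 - δ) + 2 * M2 ^ δ * M1 ^ (1 - δ)) * ‖x' - x‖ ^ δ) := by
            have h4 : (0:ℝ) ≤ 4 * M1 ^ δ * M0 ^ (1 - δ) := by positivity
            nlinarith [mul_nonneg (norm_nonneg l) hxd,
              mul_nonneg (mul_nonneg (norm_nonneg l) hxd) h4]
    · push_neg at hl
      have h1 : |(φ (x' + l) - φ x') - (φ (x + l) - φ x)| ≤ 4 * M0 := by
        calc _ ≤ 2 * min (M1 * ‖l‖) (2 * M0) := hA l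
          _ ≤ 2 * (2 * M0) := by
              have := min_le_right (M1 * ‖l‖) (2 * M0); linarith
          _ = 4 * M0 := by ring
      have h2 : |(φ (x' + l) - φ x') - (φ (x + l) - φ x)| ≤ 2 * M1 * ‖x' - x‖ := by
        calc _ ≤ min (M2 * ‖l‖) (2 * M1) * ‖x' - x‖ := hB l
          _ ≤ 2 * M1 * ‖x' - x‖ :=
              mul_le_mul_of_nonneg_right (min_le_right _ _) (norm_nonneg _)
      have := aux_interp hδ0 hδ1 h1 h2
      rw [min_eq_right hl.le, one_mul]
      refine this.trans ?_
      have e1 : (2 * M1 * ‖x' - x‖) ^ δ = 2 ^ δ * M1 ^ δ * ‖x' - x‖ ^ δ := by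
        rw [Real.mul_rpow (by positivity) (norm_nonneg _), Real.mul_rpow (by norm_num) hM1']
      have e2 : (4 * M0) ^ (1-δ) = 4 ^ (1-δ) * M0 ^ (1-δ) := by
        rw [Real.mul_rpow (by norm_num) hM0']
      rw [e1, e2]
      have h4 : ((4:ℝ)) = (2:ℝ) ^ (2:ℝ) := by
        rw [show (2:ℝ) = ((2:ℕ):ℝ) by norm_num]
        rw [Real.rpow_natCast]; norm_num
      have e3 : (2:ℝ) ^ δ * (4:ℝ) ^ (1-δ) ≤ 4 := by
        calc (2:ℝ) ^ δ * (4:ℝ) ^ (1-δ)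
            = (2:ℝ) ^ δ * ((2:ℝ) ^ (2:ℝ)) ^ (1-δ) := by rw [← h4]
          _ = (2:ℝ) ^ (δ + 2 * (1-δ)) := by
              rw [← Real.rpow_mul (by norm_num), ← Real.rpow_add two_pos]
          _ ≤ (2:ℝ) ^ (2:ℝ) :=
              Real.rpow_le_rpow_of_exponent_le one_le_two (by linarith)
          _ = 4 := h4.symm
      calc 2 ^ δ * M1 ^ δ * ‖x' - x‖ ^ δ * (4 ^ (1-δ) * M0 ^ (1-δ))
          = (2 ^ δ * 4 ^ (1-δ)) * (M1 ^ δ * M0 ^ (1-δ)) * ‖x' - x‖ ^ δ := by ring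
        _ ≤ 4 * (M1 ^ δ * M0 ^ (1-δ)) * ‖x' - x‖ ^ δ := by
            have hn : (0:ℝ) ≤ M1 ^ δ * M0 ^ (1-δ) :=
              mul_nonneg (Real.rpow_nonneg hM1' _) (Real.rpow_nonneg hM0' _)
            exact mul_le_mul_of_nonneg_right (mul_le_mul_of_nonneg_right e3 hn) hxd
        _ ≤ (4 * M1 ^ δ * M0 ^ (1 - δ) + 2 * M2 ^ δ * M1 ^ (1 - δ)) * ‖x' - x‖ ^ δ := by
            have : (0:ℝ) ≤ 2 * M2 ^ δ * M1 ^ (1 - δ) := by positivity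
            nlinarith
  -- integrate
  set C := (4 * M1 ^ δ * M0 ^ (1 - δ) + 2 * M2 ^ δ * M1 ^ (1 - δ)) * ‖x' - x‖ ^ δ with hC
  have hC0 : 0 ≤ C := by positivity
  calc ∫⁻ l, ENNReal.ofReal |(φ (x' + l) - φ x') - (φ (x + l) - φ x)| ∂F
      ≤ ∫⁻ l, ENNReal.ofReal (min ‖l‖ 1 * C) ∂F :=
        lintegral_mono fun l => ENNReal.ofReal_le_ofReal (key l)
    _ = ∫⁻ l, ENNReal.ofReal (min ‖l‖ 1) * ENNReal.ofReal C ∂F := by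
        simp_rw [ENNReal.ofReal_mul (le_min (norm_nonneg _) zero_le_one)]
    _ = (∫⁻ l, ENNReal.ofReal (min ‖l‖ 1) ∂F) * ENNReal.ofReal C :=
        lintegral_mul_const' _ _ ENNReal.ofReal_ne_top
    _ = ENNReal.ofReal Kα * ENNReal.ofReal C := by rw [hK]
    _ = ENNReal.ofReal (Kα * C) := (ENNReal.ofReal_mul hK').symm
    _ = ENNReal.ofReal
          (Kα * (4 * M1 ^ δ * M0 ^ (1 - δ) + 2 * M2 ^ δ * M1 ^ (1 - δ)) * ‖x' - x‖ ^ δ) := by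
        rw [hC]; ring_nf
end

section
/- Let α = 1 and F_μ be a 1-stable Lévy measure on ℝ^d with polar decomposition over a finite measure μ on the unit sphere. For every φ ∈ C_b³(ℝ^d), all x, x' ∈ ℝ^d and δ ∈ (0,1), we have ∫_{ℝ^d} |δ_λ¹ φ(x') − δ_λ¹ φ(x)| F_μ(dλ) ≤ K₁ (4‖Dφ‖_∞^δ ‖φ‖_∞^{1−δ} + 2‖D³φ‖_∞^δ ‖D²φ‖_∞^{1−δ}) |x'−x|^δ, where δ_λ¹ φ(x) := φ(x+λ) − φ(x) − ⟨Dφ(x), λ 1_{|λ|≤1}⟩ and K₁ := ∫_{ℝ^d} (|λ|² ∧ 1) F_μ(dλ). -/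
open MeasureTheory Set

section Aux
variable {E G : Type*} [NormedAddCommGroup E] [NormedSpace ℝ E]
  [NormedAddCommGroup G] [NormedSpace ℝ G]

lemma lip_of_deriv_bound {f : E → G} {f' : E → E →L[ℝ] G} {C : ℝ}
    (hf : ∀ z, HasFDerivAt f (f' z) z) (hC : ∀ z, ‖f' z‖ ≤ C) (a b : E) :
    ‖f a - f b‖ ≤ C * ‖a - b‖ :=
  convex_univ.norm_image_sub_le_of_norm_hasFDerivWithin_le
    (fun z _ => (hf z).hasFDerivWithinAt) (fun z _ => hC z) trivial trivial

lemma taylor_of_lip {f : E → G} {f' : E → E →L[ℝ] G} {K : ℝ} (hK0 : 0 ≤ K)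
    (hf : ∀ z, HasFDerivAt f (f' z) z)
    (hK : ∀ a b, ‖f' a - f' b‖ ≤ K * ‖a - b‖) (y l : E) :
    ‖f (y + l) - f y - f' y l‖ ≤ K * ‖l‖ ^ 2 := by
  have bound : ∀ z ∈ Metric.closedBall y ‖l‖, ‖f' z - f' y‖ ≤ K * ‖l‖ := by
    intro z hz
    have hzl : ‖z - y‖ ≤ ‖l‖ := by
      simpa [Metric.mem_closedBall, dist_eq_norm] using hz
    calc ‖f' z - f' y‖ ≤ K * ‖z - y‖ := hK z y
      _ ≤ K * ‖l‖ := mul_le_mul_of_nonneg_left hzl hK0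
  have h := (convex_closedBall y ‖l‖).norm_image_sub_le_of_norm_hasFDerivWithin_le'
    (fun z _ => (hf z).hasFDerivWithinAt) bound
    (Metric.mem_closedBall_self (norm_nonneg l))
    (by simp [Metric.mem_closedBall, dist_eq_norm] : y + l ∈ Metric.closedBall y ‖l‖)
  simpa [add_sub_cancel_left, sq, mul_assoc] using h

lemma min_le_rpow_interp {a b δ : ℝ} (ha : 0 ≤ a) (hb : 0 ≤ b)
    (hδ0 : 0 < δ) (hδ1 : δ < 1) : min a b ≤ a ^ δ * b ^ (1 - δ) := by
  have h1δ : (0:ℝ) ≤ 1 - δ := by linarith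
  rcases le_total a b with h | h
  · have e : a = a ^ δ * a ^ (1 - δ) := by
      rw [← Real.rpow_add' ha (by norm_num)]; simp
    calc min a b = a := min_eq_left h
      _ = a ^ δ * a ^ (1 - δ) := e
      _ ≤ a ^ δ * b ^ (1 - δ) :=
        mul_le_mul_of_nonneg_left (Real.rpow_le_rpow ha h h1δ) (Real.rpow_nonneg ha δ)
  · have e : b = b ^ δ * b ^ (1 - δ) := by
      rw [← Real.rpow_add' hb (by norm_num)]; simp
    calc min a b = b := min_eq_right h
      _ = b ^ δ * b ^ (1 - δ) := e
      _ ≤ a ^ δ * b ^ (1 - δ) :=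
        mul_le_mul_of_nonneg_right (Real.rpow_le_rpow hb h hδ0.le) (Real.rpow_nonneg hb _)

end Aux

set_option maxHeartbeats 1000000 in
/-- For `α = 1`, a 1-stable Lévy measure `F_μ`, `φ ∈ C_b³(ℝ^d)` and `δ ∈ (0,1)`:
`∫ |δ_λ¹φ(x') − δ_λ¹φ(x)| dF_μ ≤ K₁ (4 M1^δ M0^{1-δ} + 2 M3^δ M2^{1-δ}) |x'-x|^δ`,
where `δ_λ¹φ(x) = φ(x+λ) − φ(x) − ⟨Dφ(x), λ 1_{|λ|≤1}⟩` and `K₁ = ∫ (|λ|² ∧ 1) dF_μ`. -/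
theorem stmt_2 {d : ℕ} (δ : ℝ) (hδ : δ ∈ Set.Ioo (0:ℝ) 1)
    (μ F : Measure (EuclideanSpace ℝ (Fin d))) [IsFiniteMeasure μ]
    (hμ : μ (Metric.sphere (0 : EuclideanSpace ℝ (Fin d)) 1)ᶜ = 0)
    (hF : ∀ B : Set (EuclideanSpace ℝ (Fin d)), MeasurableSet B →
      F B = ∫⁻ z, (∫⁻ r in Set.Ioi (0:ℝ),
        Set.indicator B (fun _ => ENNReal.ofReal (r ^ (-2 : ℝ))) (r • z)) ∂μ)
    (φ : EuclideanSpace ℝ (Fin d) → ℝ) (hφ : ContDiff ℝ 3 φ)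
    (M0 M1 M2 M3 K1 : ℝ)
    (hM0 : ∀ x, |φ x| ≤ M0) (hM0' : 0 ≤ M0)
    (hM1 : ∀ x, ‖fderiv ℝ φ x‖ ≤ M1) (hM1' : 0 ≤ M1)
    (hM2 : ∀ x, ‖iteratedFDeriv ℝ 2 φ x‖ ≤ M2) (hM2' : 0 ≤ M2)
    (hM3 : ∀ x, ‖iteratedFDeriv ℝ 3 φ x‖ ≤ M3) (hM3' : 0 ≤ M3)
    (hK : ∫⁻ l, ENNReal.ofReal (min (‖l‖^2) 1) ∂F = ENNReal.ofReal K1) (hK' : 0 ≤ K1)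
    (x x' : EuclideanSpace ℝ (Fin d)) :
    ∫⁻ l, ENNReal.ofReal
        |(φ (x' + l) - φ x' - fderiv ℝ φ x' (if ‖l‖ ≤ 1 then l else 0))
          - (φ (x + l) - φ x - fderiv ℝ φ x (if ‖l‖ ≤ 1 then l else 0))| ∂F
      ≤ ENNReal.ofReal
          (K1 * (4 * M1 ^ δ * M0 ^ (1 - δ) + 2 * M3 ^ δ * M2 ^ (1 - δ)) * ‖x' - x‖ ^ δ) := by
  obtain ⟨hδ0, hδ1⟩ := hδ
  set h : EuclideanSpace ℝ (Fin d) := x' - x with hh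
  have hx' : x + h = x' := by rw [hh]; abel
  -- differentiability facts
  have hφd : Differentiable ℝ φ := hφ.differentiable (by norm_num)
  have hφ2 : ContDiff ℝ 2 (fderiv ℝ φ) := hφ.fderiv_right (by norm_num)
  have hφ2d : Differentiable ℝ (fderiv ℝ φ) := hφ2.differentiable (by norm_num)
  set D2 := fderiv ℝ (fderiv ℝ φ) with hD2
  have hφ1' : ContDiff ℝ 1 D2 := hφ2.fderiv_right (by norm_num)
  have hD2d : Differentiable ℝ D2 := hφ1'.differentiable (by norm_num)
  -- norm bounds for higher derivatives
  have hb2 : ∀ z, ‖D2 z‖ ≤ M2 := by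
    intro z
    have : ‖D2 z‖ = ‖iteratedFDeriv ℝ 2 φ z‖ := by
      rw [hD2, show (2:ℕ) = 0 + 1 + 1 by norm_num, ← norm_iteratedFDeriv_fderiv,
        ← norm_iteratedFDeriv_fderiv, norm_iteratedFDeriv_zero]
    rw [this]; exact hM2 z
  have hb3 : ∀ z, @norm _ ContinuousLinearMap.hasOpNorm (fderiv ℝ D2 z) ≤ M3 := by
    intro z
    have : @norm _ ContinuousLinearMap.hasOpNorm (fderiv ℝ D2 z) = ‖iteratedFDeriv ℝ 3 φ z‖ := by
      rw [hD2, show (3:ℕ) = 0 + 1 + 1 + 1 by norm_num,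
        ← norm_iteratedFDeriv_fderiv, ← norm_iteratedFDeriv_fderiv,
        ← norm_iteratedFDeriv_fderiv, norm_iteratedFDeriv_zero]
    rw [this]; exact hM3 z
  -- Lipschitz facts
  have lip1 : ∀ a b, |φ a - φ b| ≤ M1 * ‖a - b‖ := by
    intro a b
    have := lip_of_deriv_bound (fun z => (hφd z).hasFDerivAt) hM1 a b
    simpa [Real.norm_eq_abs] using this
  have lip2 : ∀ a b, ‖fderiv ℝ φ a - fderiv ℝ φ b‖ ≤ M2 * ‖a - b‖ :=
    lip_of_deriv_bound (fun z => (hφ2d z).hasFDerivAt) hb2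
  have lip3 : ∀ a b, ‖D2 a - D2 b‖ ≤ M3 * ‖a - b‖ :=
    lip_of_deriv_bound (f' := fderiv ℝ D2) (fun z => (hD2d z).hasFDerivAt) hb3
  -- second-order Taylor bound for φ
  have tay2 : ∀ y l : EuclideanSpace ℝ (Fin d), |φ (y + l) - φ y - fderiv ℝ φ y l| ≤ M2 * ‖l‖ ^ 2 := by
    intro y l
    have := taylor_of_lip hM2' (fun z => (hφd z).hasFDerivAt) lip2 y l
    simpa [Real.norm_eq_abs] using this
  -- the translated difference function ψ and its derivative
  set ψ : EuclideanSpace ℝ (Fin d) → ℝ := fun y => φ (y + h) - φ y with hψdef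
  set ψ' : EuclideanSpace ℝ (Fin d) → (EuclideanSpace ℝ (Fin d) →L[ℝ] ℝ) := fun y => fderiv ℝ φ (y + h) - fderiv ℝ φ y with hψ'def
  have htrans : ∀ (g : EuclideanSpace ℝ (Fin d) → (EuclideanSpace ℝ (Fin d) →L[ℝ] ℝ)) (g' : EuclideanSpace ℝ (Fin d) → EuclideanSpace ℝ (Fin d) →L[ℝ] (EuclideanSpace ℝ (Fin d) →L[ℝ] ℝ))
      (hg : ∀ z, HasFDerivAt g (g' z) z) (y : EuclideanSpace ℝ (Fin d)),
      HasFDerivAt (fun z => g (z + h)) (g' (y + h)) y := by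
    intro g g' hg y
    have : HasFDerivAt (fun z : EuclideanSpace ℝ (Fin d) => z + h) (ContinuousLinearMap.id ℝ (EuclideanSpace ℝ (Fin d))) y :=
      (hasFDerivAt_id y).add_const h
    have hc := (hg (y + h)).comp y this
    simpa [Function.comp_def] using hc
  have hψ : ∀ y, HasFDerivAt ψ (ψ' y) y := by
    intro y
    have h1 : HasFDerivAt (fun z : EuclideanSpace ℝ (Fin d) => z + h) (ContinuousLinearMap.id ℝ (EuclideanSpace ℝ (Fin d))) y :=
      (hasFDerivAt_id y).add_const h
    have h2 := ((hφd (y + h)).hasFDerivAt.comp y h1).sub (hφd y).hasFDerivAt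
    simpa [hψdef, hψ'def, Function.comp_def, Pi.sub_def] using h2
  have hψ'lip : ∀ a b, ‖ψ' a - ψ' b‖ ≤ (M3 * ‖h‖) * ‖a - b‖ := by
    have hχ : ∀ y, HasFDerivAt ψ' (D2 (y + h) - D2 y) y := by
      intro y
      have h1 : HasFDerivAt (fun z : EuclideanSpace ℝ (Fin d) => z + h) (ContinuousLinearMap.id ℝ (EuclideanSpace ℝ (Fin d))) y :=
        (hasFDerivAt_id y).add_const h
      have h2 := ((hφ2d (y + h)).hasFDerivAt.comp y h1).sub (hφ2d y).hasFDerivAt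
      simpa [hψ'def, hD2, Function.comp_def, Pi.sub_def] using h2
    refine lip_of_deriv_bound hχ (fun z => ?_)
    have := lip3 (z + h) z
    simpa [add_sub_cancel_left] using this
  have hMh : 0 ≤ M3 * ‖h‖ := mul_nonneg hM3' (norm_nonneg h)
  have tayψ : ∀ l : EuclideanSpace ℝ (Fin d), |ψ (x + l) - ψ x - ψ' x l| ≤ (M3 * ‖h‖) * ‖l‖ ^ 2 := by
    intro l
    have := taylor_of_lip hMh hψ hψ'lip x l
    simpa [Real.norm_eq_abs] using this
  -- identify the integrand with the ψ-form when ‖l‖ ≤ 1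
  have hid : ∀ l : EuclideanSpace ℝ (Fin d), ‖l‖ ≤ 1 →
      (φ (x' + l) - φ x' - fderiv ℝ φ x' l) - (φ (x + l) - φ x - fderiv ℝ φ x l)
        = ψ (x + l) - ψ x - ψ' x l := by
    intro l hl
    have e1 : x + l + h = x' + l := by rw [hh]; abel
    simp only [hψdef, hψ'def, ContinuousLinearMap.sub_apply, e1, hx']
    ring
  set C' : ℝ := 4 * M1 ^ δ * M0 ^ (1 - δ) + 2 * M3 ^ δ * M2 ^ (1 - δ) with hC'
  have hnh : (0:ℝ) ≤ ‖h‖ := norm_nonneg h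
  have hrh : (0:ℝ) ≤ ‖h‖ ^ δ := Real.rpow_nonneg hnh δ
  have hC'0 : 0 ≤ C' := by
    rw [hC']
    have a1 : (0:ℝ) ≤ M1 ^ δ := Real.rpow_nonneg hM1' δ
    have a2 : (0:ℝ) ≤ M0 ^ (1 - δ) := Real.rpow_nonneg hM0' _
    have a3 : (0:ℝ) ≤ M3 ^ δ := Real.rpow_nonneg hM3' δ
    have a4 : (0:ℝ) ≤ M2 ^ (1 - δ) := Real.rpow_nonneg hM2' _
    have := mul_nonneg (mul_nonneg (by norm_num : (0:ℝ) ≤ 4) a1) a2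
    have := mul_nonneg (mul_nonneg (by norm_num : (0:ℝ) ≤ 2) a3) a4
    linarith
  have hfirst : (0:ℝ) ≤ 4 * M1 ^ δ * M0 ^ (1 - δ) := by
    have a1 : (0:ℝ) ≤ M1 ^ δ := Real.rpow_nonneg hM1' δ
    have a2 : (0:ℝ) ≤ M0 ^ (1 - δ) := Real.rpow_nonneg hM0' _
    exact mul_nonneg (mul_nonneg (by norm_num) a1) a2
  have hsecond : (0:ℝ) ≤ 2 * M3 ^ δ * M2 ^ (1 - δ) := by
    have a3 : (0:ℝ) ≤ M3 ^ δ := Real.rpow_nonneg hM3' δ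
    have a4 : (0:ℝ) ≤ M2 ^ (1 - δ) := Real.rpow_nonneg hM2' _
    exact mul_nonneg (mul_nonneg (by norm_num) a3) a4
  -- key pointwise bound
  have key : ∀ l : EuclideanSpace ℝ (Fin d),
      |(φ (x' + l) - φ x' - fderiv ℝ φ x' (if ‖l‖ ≤ 1 then l else 0))
        - (φ (x + l) - φ x - fderiv ℝ φ x (if ‖l‖ ≤ 1 then l else 0))|
        ≤ (C' * ‖h‖ ^ δ) * min (‖l‖ ^ 2) 1 := by
    intro l
    by_cases hl : ‖l‖ ≤ 1
    · simp only [if_pos hl]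
      have hmin : min (‖l‖ ^ 2) 1 = ‖l‖ ^ 2 :=
        min_eq_left (by nlinarith [norm_nonneg l])
      have b1 : |(φ (x' + l) - φ x' - fderiv ℝ φ x' l)
          - (φ (x + l) - φ x - fderiv ℝ φ x l)| ≤ (M3 * ‖h‖) * ‖l‖ ^ 2 := by
        rw [hid l hl]; exact tayψ l
      have b2 : |(φ (x' + l) - φ x' - fderiv ℝ φ x' l)
          - (φ (x + l) - φ x - fderiv ℝ φ x l)| ≤ (2 * M2) * ‖l‖ ^ 2 := by
        have t1 := tay2 x' l
        have t2 := tay2 x l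
        have := abs_sub (φ (x' + l) - φ x' - fderiv ℝ φ x' l)
          (φ (x + l) - φ x - fderiv ℝ φ x l)
        linarith
      have h3 : |(φ (x' + l) - φ x' - fderiv ℝ φ x' l)
          - (φ (x + l) - φ x - fderiv ℝ φ x l)|
          ≤ min (M3 * ‖h‖) (2 * M2) * ‖l‖ ^ 2 := by
        rcases le_total (M3 * ‖h‖) (2 * M2) with hc | hc
        · rw [min_eq_left hc]; exact b1
        · rw [min_eq_right hc]; exact b2
      have pow2 : (2:ℝ) ^ (1 - δ) ≤ 2 := by
        calc (2:ℝ) ^ (1 - δ) ≤ (2:ℝ) ^ (1:ℝ) :=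
              Real.rpow_le_rpow_of_exponent_le one_le_two (by linarith)
          _ = 2 := Real.rpow_one 2
      have step : min (M3 * ‖h‖) (2 * M2) ≤ 2 * M3 ^ δ * M2 ^ (1 - δ) * ‖h‖ ^ δ := by
        have a3 : (0:ℝ) ≤ M3 ^ δ := Real.rpow_nonneg hM3' δ
        have a4 : (0:ℝ) ≤ M2 ^ (1 - δ) := Real.rpow_nonneg hM2' _
        calc min (M3 * ‖h‖) (2 * M2)
            ≤ (M3 * ‖h‖) ^ δ * (2 * M2) ^ (1 - δ) :=
              min_le_rpow_interp (mul_nonneg hM3' hnh) (by positivity) hδ0 hδ1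
          _ = (M3 ^ δ * ‖h‖ ^ δ) * ((2:ℝ) ^ (1 - δ) * M2 ^ (1 - δ)) := by
              rw [Real.mul_rpow hM3' hnh, Real.mul_rpow (by norm_num) hM2']
          _ ≤ (M3 ^ δ * ‖h‖ ^ δ) * (2 * M2 ^ (1 - δ)) := by
              exact mul_le_mul_of_nonneg_left
                (mul_le_mul_of_nonneg_right pow2 a4) (mul_nonneg a3 hrh)
          _ = 2 * M3 ^ δ * M2 ^ (1 - δ) * ‖h‖ ^ δ := by ring
      have hC'step : 2 * M3 ^ δ * M2 ^ (1 - δ) ≤ C' := by rw [hC']; linarith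
      rw [hmin]
      calc |(φ (x' + l) - φ x' - fderiv ℝ φ x' l)
          - (φ (x + l) - φ x - fderiv ℝ φ x l)|
          ≤ min (M3 * ‖h‖) (2 * M2) * ‖l‖ ^ 2 := h3
        _ ≤ (2 * M3 ^ δ * M2 ^ (1 - δ) * ‖h‖ ^ δ) * ‖l‖ ^ 2 :=
            mul_le_mul_of_nonneg_right step (sq_nonneg _)
        _ ≤ (C' * ‖h‖ ^ δ) * ‖l‖ ^ 2 :=
            mul_le_mul_of_nonneg_right
              (mul_le_mul_of_nonneg_right hC'step hrh) (sq_nonneg _)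
    · simp only [if_neg hl, map_zero, sub_zero]
      have hl1 : (1:ℝ) < ‖l‖ := not_le.1 hl
      have hmin : min (‖l‖ ^ 2) 1 = 1 := min_eq_right (by nlinarith)
      have e2 : x' + l - (x + l) = h := by rw [hh]; abel
      have b1 : |(φ (x' + l) - φ x') - (φ (x + l) - φ x)| ≤ 2 * M1 * ‖h‖ := by
        have t1 := lip1 (x' + l) (x + l)
        have t2 := lip1 x' x
        rw [e2] at t1
        rw [← hh] at t2
        have habs : |(φ (x' + l) - φ x') - (φ (x + l) - φ x)|
            ≤ |φ (x' + l) - φ (x + l)| + |φ x' - φ x| := by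
          have := abs_sub (φ (x' + l) - φ (x + l)) (φ x' - φ x)
          have e3 : (φ (x' + l) - φ x') - (φ (x + l) - φ x)
              = (φ (x' + l) - φ (x + l)) - (φ x' - φ x) := by ring
          rw [e3]; exact this
        linarith
      have b2 : |(φ (x' + l) - φ x') - (φ (x + l) - φ x)| ≤ 4 * M0 := by
        have a1 := hM0 (x' + l); have a2 := hM0 x'; have a3 := hM0 (x + l); have a4 := hM0 x
        have := abs_nonneg (φ (x' + l))
        calc |(φ (x' + l) - φ x') - (φ (x + l) - φ x)|
            ≤ |φ (x' + l) - φ x'| + |φ (x + l) - φ x| := abs_sub _ _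
          _ ≤ (|φ (x' + l)| + |φ x'|) + (|φ (x + l)| + |φ x|) := by
              have := abs_sub (φ (x' + l)) (φ x')
              have := abs_sub (φ (x + l)) (φ x)
              linarith [abs_sub (φ (x' + l)) (φ x'), abs_sub (φ (x + l)) (φ x)]
          _ ≤ 4 * M0 := by linarith
      have h3 : |(φ (x' + l) - φ x') - (φ (x + l) - φ x)|
          ≤ min (2 * M1 * ‖h‖) (4 * M0) := le_min b1 b2
      have pow4 : (2:ℝ) ^ δ * (4:ℝ) ^ (1 - δ) ≤ 4 := by
        have h22 : ((2:ℝ) ^ (2:ℝ)) = 4 := by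
          rw [show (2:ℝ) = ((2:ℕ):ℝ) by norm_num, Real.rpow_natCast]; norm_num
        calc (2:ℝ) ^ δ * (4:ℝ) ^ (1 - δ)
            = (2:ℝ) ^ δ * ((2:ℝ) ^ (2:ℝ)) ^ (1 - δ) := by rw [h22]
          _ = (2:ℝ) ^ δ * (2:ℝ) ^ ((2:ℝ) * (1 - δ)) := by
              rw [← Real.rpow_mul (by norm_num : (0:ℝ) ≤ 2)]
          _ = (2:ℝ) ^ (δ + 2 * (1 - δ)) := (Real.rpow_add two_pos _ _).symm
          _ ≤ (2:ℝ) ^ (2:ℝ) :=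
              Real.rpow_le_rpow_of_exponent_le one_le_two (by linarith)
          _ = 4 := h22
      have step : min (2 * M1 * ‖h‖) (4 * M0) ≤ 4 * M1 ^ δ * M0 ^ (1 - δ) * ‖h‖ ^ δ := by
        have a1 : (0:ℝ) ≤ M1 ^ δ := Real.rpow_nonneg hM1' δ
        have a2 : (0:ℝ) ≤ M0 ^ (1 - δ) := Real.rpow_nonneg hM0' _
        have a5 : (0:ℝ) ≤ (2:ℝ) ^ δ := Real.rpow_nonneg (by norm_num) δ
        have a6 : (0:ℝ) ≤ (4:ℝ) ^ (1 - δ) := Real.rpow_nonneg (by norm_num) _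
        calc min (2 * M1 * ‖h‖) (4 * M0)
            ≤ (2 * M1 * ‖h‖) ^ δ * (4 * M0) ^ (1 - δ) :=
              min_le_rpow_interp (by positivity) (by positivity) hδ0 hδ1
          _ = ((2:ℝ) ^ δ * M1 ^ δ * ‖h‖ ^ δ) * ((4:ℝ) ^ (1 - δ) * M0 ^ (1 - δ)) := by
              rw [Real.mul_rpow (by positivity) hnh, Real.mul_rpow (by norm_num) hM1',
                Real.mul_rpow (by norm_num) hM0']
          _ = ((2:ℝ) ^ δ * (4:ℝ) ^ (1 - δ)) * (M1 ^ δ * M0 ^ (1 - δ) * ‖h‖ ^ δ) := by ring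
          _ ≤ 4 * (M1 ^ δ * M0 ^ (1 - δ) * ‖h‖ ^ δ) := by
              have hnn : (0:ℝ) ≤ M1 ^ δ * M0 ^ (1 - δ) * ‖h‖ ^ δ :=
                mul_nonneg (mul_nonneg a1 a2) hrh
              exact mul_le_mul_of_nonneg_right pow4 hnn
          _ = 4 * M1 ^ δ * M0 ^ (1 - δ) * ‖h‖ ^ δ := by ring
      have hC'step : 4 * M1 ^ δ * M0 ^ (1 - δ) ≤ C' := by rw [hC']; linarith
      rw [hmin, mul_one]
      calc |(φ (x' + l) - φ x') - (φ (x + l) - φ x)|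
          ≤ min (2 * M1 * ‖h‖) (4 * M0) := h3
        _ ≤ 4 * M1 ^ δ * M0 ^ (1 - δ) * ‖h‖ ^ δ := step
        _ ≤ C' * ‖h‖ ^ δ := mul_le_mul_of_nonneg_right hC'step hrh
  -- integrate
  have hcp : (0:ℝ) ≤ C' * ‖h‖ ^ δ := mul_nonneg hC'0 hrh
  calc ∫⁻ l, ENNReal.ofReal
        |(φ (x' + l) - φ x' - fderiv ℝ φ x' (if ‖l‖ ≤ 1 then l else 0))
          - (φ (x + l) - φ x - fderiv ℝ φ x (if ‖l‖ ≤ 1 then l else 0))| ∂F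
      ≤ ∫⁻ l, ENNReal.ofReal (C' * ‖h‖ ^ δ) * ENNReal.ofReal (min (‖l‖ ^ 2) 1) ∂F := by
        apply lintegral_mono
        intro l
        dsimp only
        rw [← ENNReal.ofReal_mul hcp]
        exact ENNReal.ofReal_le_ofReal (key l)
    _ = ENNReal.ofReal (C' * ‖h‖ ^ δ) * ∫⁻ l, ENNReal.ofReal (min (‖l‖ ^ 2) 1) ∂F :=
        lintegral_const_mul' _ _ ENNReal.ofReal_ne_top
    _ = ENNReal.ofReal (C' * ‖h‖ ^ δ) * ENNReal.ofReal K1 := by rw [hK]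
    _ = ENNReal.ofReal (C' * ‖h‖ ^ δ * K1) := (ENNReal.ofReal_mul hcp).symm
    _ = ENNReal.ofReal (K1 * C' * ‖h‖ ^ δ) := by congr 1; ring
end
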